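/- Let k ≥ 2 be an integer and β a real number such that the condition '−1 < β < 1 if k = 2, and −1/(2^{k−1} − 1) < β < 1/(2^{k−1} cos^{k−1}(π/(k−1)) + 1) if k ≥ 3' fails. Then there exists a finite connected hypergraph H all of whose hyperedges have size exactly k such that the multivariate Ising partition function Z_H^β(z₁, …, zₙ) = Σ_{S ⊆ V(H)} β^{|E(S, S̄)|} ∏_{i ∈ S} z_i does not have the Lee-Yang property. (A single hyperedge of size k suffices when k ≥ 3, and a single edge when k = 2.) -/

import Mathlib

open scoped Classical
open Finset

set_option maxHeartbeats 1000000


open scoped Classical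
open Finset


lemma prod_ite2 (k : ℕ) (hk : 2 ≤ k) (A B C : ℂ) :
    (∏ i : Fin k, (if (i : ℕ) = 0 then A else if (i : ℕ) = 1 then B else C))
      = A * B * C ^ (k - 2) := by
  have h := Fin.prod_univ_eq_prod_range (fun j => if j = 0 then A else if j = 1 then B else C) k
  rw [h]
  have h0 : 0 ∈ Finset.range k := by simp; omega
  rw [← Finset.mul_prod_erase (Finset.range k) _ h0]
  have h1 : 1 ∈ (Finset.range k).erase 0 := by simp; omega
  rw [← Finset.mul_prod_erase _ _ h1]
  have hC : ∀ j ∈ ((Finset.range k).erase 0).erase 1,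
      (if j = 0 then A else if j = 1 then B else C) = C := by
    intro j hj
    simp only [Finset.mem_erase] at hj
    rw [if_neg hj.2.1, if_neg hj.1]
  rw [Finset.prod_congr rfl hC, Finset.prod_const]
  have hcard : (((Finset.range k).erase 0).erase 1).card = k - 2 := by
    rw [Finset.card_erase_of_mem h1, Finset.card_erase_of_mem h0, Finset.card_range]
    omega
  rw [hcard]
  simp
  ring

lemma master (k : ℕ) (hk : 2 ≤ k) (β : ℝ) (z : Fin k → ℂ) :
    (∑ S : Finset (Fin k),
        (β : ℂ) ^ ((({Finset.univ} : Finset (Finset (Fin k))).filter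
            (fun e => (e ∩ S).Nonempty ∧ (e \ S).Nonempty)).card) * ∏ i ∈ S, z i)
      = (1 - (β : ℂ)) * (1 + ∏ i, z i) + (β : ℂ) * ∏ i, (1 + z i) := by
  haveI : NeZero k := ⟨by omega⟩
  have huniv : (∅ : Finset (Fin k)) ≠ Finset.univ := by
    exact (Finset.univ_nonempty (α := Fin k)).ne_empty.symm
  have hcoef : ∀ S : Finset (Fin k),
      (β : ℂ) ^ ((({Finset.univ} : Finset (Finset (Fin k))).filter
          (fun e => (e ∩ S).Nonempty ∧ (e \ S).Nonempty)).card)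
        = if S = ∅ ∨ S = Finset.univ then 1 else (β : ℂ) := by
    intro S
    rw [Finset.filter_singleton]
    by_cases hS : S = ∅ ∨ S = Finset.univ
    · have hp : ¬((Finset.univ ∩ S).Nonempty ∧ (Finset.univ \ S).Nonempty) := by
        rcases hS with rfl | rfl <;> simp
      rw [if_neg hp, if_pos hS]
      simp
    · push_neg at hS
      have hp : (Finset.univ ∩ S).Nonempty ∧ (Finset.univ \ S).Nonempty := by
        constructor
        · rw [Finset.univ_inter]
          exact hS.1
        · rw [Finset.sdiff_nonempty]
          intro hsub
          exact hS.2 (Finset.univ_subset_iff.mp hsub)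
      rw [if_pos hp, if_neg (fun h => h.elim hS.1.ne_empty hS.2)]
      simp
  have step1 : (∑ S : Finset (Fin k),
        (β : ℂ) ^ ((({Finset.univ} : Finset (Finset (Fin k))).filter
            (fun e => (e ∩ S).Nonempty ∧ (e \ S).Nonempty)).card) * ∏ i ∈ S, z i)
      = ∑ S : Finset (Fin k), ((β : ℂ) * ∏ i ∈ S, z i
          + ((if S = ∅ then (1 - (β:ℂ)) * ∏ i ∈ S, z i else 0)
            + (if S = Finset.univ then (1 - (β:ℂ)) * ∏ i ∈ S, z i else 0))) := by
    apply Finset.sum_congr rfl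
    intro S _
    rw [hcoef S]
    by_cases h0 : S = ∅
    · subst h0
      rw [if_pos (Or.inl rfl), if_pos rfl, if_neg huniv]
      ring
    · by_cases h1 : S = Finset.univ
      · subst h1
        rw [if_pos (Or.inr rfl), if_neg huniv.symm, if_pos rfl]
        ring
      · rw [if_neg (by tauto), if_neg h0, if_neg h1]
        ring
  rw [step1, Finset.sum_add_distrib, Finset.sum_add_distrib]
  rw [Finset.sum_ite_eq' Finset.univ (∅ : Finset (Fin k)) (fun S => (1 - (β:ℂ)) * ∏ i ∈ S, z i)]
  rw [Finset.sum_ite_eq' Finset.univ (Finset.univ : Finset (Fin k)) (fun S => (1 - (β:ℂ)) * ∏ i ∈ S, z i)]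
  have hprod : ∑ S : Finset (Fin k), ∏ i ∈ S, z i = ∏ i, (1 + z i) := by
    have h := Finset.prod_add z (fun _ => (1 : ℂ)) Finset.univ
    simp only [Finset.prod_const_one, mul_one, Finset.powerset_univ] at h
    rw [show (fun i => 1 + z i) = (fun i => z i + 1) from funext fun i => add_comm 1 (z i), h]
  rw [← Finset.mul_sum, hprod]
  simp
  ring

lemma build (k : ℕ) (hk : 2 ≤ k) (β : ℝ) (Z1 Z2 Z3 : ℂ)
    (h1 : 1 < ‖Z1‖) (h2 : 1 ≤ ‖Z2‖) (h3 : 1 ≤ ‖Z3‖)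
    (heq : (1 - (β : ℂ)) * (1 + Z1 * Z2 * Z3 ^ (k - 2))
        + (β : ℂ) * ((1 + Z1) * (1 + Z2) * (1 + Z3) ^ (k - 2)) = 0) :
    ∃ (n : ℕ) (E : Finset (Finset (Fin n))),
      (∀ e ∈ E, e.card = k) ∧
      (∀ u v : Fin n,
        Relation.ReflTransGen (fun a b => ∃ e ∈ E, a ∈ e ∧ b ∈ e) u v) ∧
      ∃ z : Fin n → ℂ,
        (∀ i, 1 ≤ ‖z i‖) ∧ (∃ i, 1 < ‖z i‖) ∧
        (∑ S : Finset (Fin n),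
            (β : ℂ) ^ (E.filter (fun e => (e ∩ S).Nonempty ∧ (e \ S).Nonempty)).card *
              ∏ i ∈ S, z i) = 0 := by
  refine ⟨k, {Finset.univ}, ?_, ?_, ?_⟩
  · intro e he
    rw [Finset.mem_singleton] at he
    subst he
    simp
  · intro u v
    exact Relation.ReflTransGen.single ⟨Finset.univ, Finset.mem_singleton_self _,
      Finset.mem_univ _, Finset.mem_univ _⟩
  · refine ⟨fun i => if (i : ℕ) = 0 then Z1 else if (i : ℕ) = 1 then Z2 else Z3, ?_, ?_, ?_⟩
    · intro i
      dsimp only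
      split_ifs
      · exact h1.le
      · exact h2
      · exact h3
    · refine ⟨⟨0, by omega⟩, ?_⟩
      simpa using h1
    · rw [master k hk β _]
      have hz1 : (∏ i : Fin k, (if (i : ℕ) = 0 then Z1 else if (i : ℕ) = 1 then Z2 else Z3))
          = Z1 * Z2 * Z3 ^ (k - 2) := prod_ite2 k hk Z1 Z2 Z3
      have hz2 : (∏ i : Fin k, (1 + (if (i : ℕ) = 0 then Z1 else if (i : ℕ) = 1 then Z2 else Z3)))
          = (1 + Z1) * (1 + Z2) * (1 + Z3) ^ (k - 2) := by
        have : ∀ i : Fin k, (1 + (if (i : ℕ) = 0 then Z1 else if (i : ℕ) = 1 then Z2 else Z3))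
            = (if (i : ℕ) = 0 then 1 + Z1 else if (i : ℕ) = 1 then 1 + Z2 else 1 + Z3) := by
          intro i; split_ifs <;> rfl
        rw [Finset.prod_congr rfl (fun i _ => this i)]
        exact prod_ite2 k hk _ _ _
      rw [hz1, hz2]
      exact heq

lemma aux_ub (M : ℝ) (hM : 1 ≤ M) : ∀ n : ℕ, (M + 1) ^ n * M ≤ M ^ (n + 1) + (2 ^ n - 1) * M ^ n
  | 0 => by simp
  | (n + 1) => by
    have ih := aux_ub M hM n
    have hM0 : 0 ≤ M := by linarith
    have hMn : M ^ n ≤ M ^ (n + 1) := by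
      calc M ^ n = M ^ n * 1 := by ring
      _ ≤ M ^ n * M := by nlinarith [pow_nonneg hM0 n]
      _ = M ^ (n + 1) := by ring
    have h2 : (1:ℝ) ≤ 2 ^ n := one_le_pow₀ (by norm_num)
    calc (M + 1) ^ (n + 1) * M = ((M + 1) ^ n * M) * (M + 1) := by ring
      _ ≤ (M ^ (n + 1) + (2 ^ n - 1) * M ^ n) * (M + 1) := by nlinarith
      _ = M ^ (n + 2) + M ^ (n+1) + (2 ^ n - 1) * M ^ (n+1) + (2 ^ n - 1) * M ^ n := by ring
      _ ≤ M ^ (n + 2) + M ^ (n+1) + (2 ^ n - 1) * M ^ (n+1) + (2 ^ n - 1) * M ^ (n+1) := by nlinarith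
      _ = M ^ (n + 1 + 1) + (2 ^ (n+1) - 1) * M ^ (n + 1) := by ring

lemma aux_lb (M : ℝ) (hM : 1 ≤ M) : ∀ n : ℕ, M ^ (n + 1) - (n + 1) * M ^ n ≤ (M - 1) ^ n * M
  | 0 => by simp
  | (n + 1) => by
    have ih := aux_lb M hM n
    have hM0 : 0 ≤ M := by linarith
    have hM1 : 0 ≤ M - 1 := by linarith
    have hMn : 0 ≤ M ^ n := pow_nonneg hM0 n
    have h1 : (M ^ (n + 1) - (n + 1) * M ^ n) * (M - 1) ≤ ((M - 1) ^ n * M) * (M - 1) :=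
      mul_le_mul_of_nonneg_right ih hM1
    have h2 : ((M - 1) ^ n * M) * (M - 1) = (M - 1) ^ (n + 1) * M := by ring
    have h3 : 0 ≤ ((n:ℝ) + 1) * M ^ n := by positivity
    have h4 : (M ^ (n + 1) - ((n:ℝ) + 1) * M ^ n) * (M - 1)
        = M ^ (n + 1 + 1) - ((n:ℝ) + 1 + 1) * M ^ (n + 1) + ((n:ℝ) + 1) * M ^ n := by ring
    push_cast
    linarith [h1, h2.le, h2.ge, h4.le, h4.ge, h3]

lemma case_real (k : ℕ) (hk : 2 ≤ k) (β : ℝ) (z₀ : ℝ) (hz : 1 < |z₀|)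
    (hf : (1 - β) * (1 + z₀ ^ k) + β * (1 + z₀) ^ k = 0) :
    ∃ (n : ℕ) (E : Finset (Finset (Fin n))),
      (∀ e ∈ E, e.card = k) ∧
      (∀ u v : Fin n,
        Relation.ReflTransGen (fun a b => ∃ e ∈ E, a ∈ e ∧ b ∈ e) u v) ∧
      ∃ z : Fin n → ℂ,
        (∀ i, 1 ≤ ‖z i‖) ∧ (∃ i, 1 < ‖z i‖) ∧
        (∑ S : Finset (Fin n),
            (β : ℂ) ^ (E.filter (fun e => (e ∩ S).Nonempty ∧ (e \ S).Nonempty)).card *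
              ∏ i ∈ S, z i) = 0 := by
  have habs : 1 < ‖(z₀ : ℂ)‖ := by rwa [Complex.norm_real, Real.norm_eq_abs]
  apply build k hk β (z₀ : ℂ) (z₀ : ℂ) (z₀ : ℂ) habs habs.le habs.le
  have hkk : k - 2 + 2 = k := by omega
  have e1 : (z₀ : ℂ) * (z₀ : ℂ) * (z₀ : ℂ) ^ (k - 2) = (z₀ : ℂ) ^ k := by
    calc (z₀ : ℂ) * (z₀ : ℂ) * (z₀ : ℂ) ^ (k - 2) = (z₀ : ℂ) ^ (k - 2) * (z₀ : ℂ) ^ 2 := by ring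
    _ = (z₀ : ℂ) ^ (k - 2 + 2) := (pow_add _ _ _).symm
    _ = (z₀ : ℂ) ^ k := by rw [hkk]
  have e2 : (1 + (z₀ : ℂ)) * (1 + (z₀ : ℂ)) * (1 + (z₀ : ℂ)) ^ (k - 2) = (1 + (z₀ : ℂ)) ^ k := by
    calc (1 + (z₀ : ℂ)) * (1 + (z₀ : ℂ)) * (1 + (z₀ : ℂ)) ^ (k - 2)
        = (1 + (z₀ : ℂ)) ^ (k - 2) * (1 + (z₀ : ℂ)) ^ 2 := by ring
    _ = (1 + (z₀ : ℂ)) ^ (k - 2 + 2) := (pow_add _ _ _).symm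
    _ = (1 + (z₀ : ℂ)) ^ k := by rw [hkk]
  rw [e1, e2]
  exact_mod_cast congrArg (Complex.ofReal) hf

lemma rootL1 (k : ℕ) (hk : 2 ≤ k) (β : ℝ) (hβ : β < -(1 / (2 ^ (k - 1) - 1))) :
    ∃ z₀ : ℝ, 1 < |z₀| ∧ (1 - β) * (1 + z₀ ^ k) + β * (1 + z₀) ^ k = 0 := by
  set f : ℝ → ℝ := fun t => (1 - β) * (1 + t ^ k) + β * (1 + t) ^ k with hf
  have hcont : Continuous f := by fun_prop
  have h2k1 : (1:ℝ) ≤ 2 ^ (k - 1) - 1 := by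
    have : (2:ℝ) ^ 1 ≤ 2 ^ (k - 1) := pow_le_pow_right₀ (by norm_num) (by omega)
    norm_num at this ⊢; linarith
  have hβd : β * (2 ^ (k - 1) - 1) < -1 := by
    have hd : (0:ℝ) < 2 ^ (k - 1) - 1 := by linarith
    have h1 := mul_lt_mul_of_pos_right hβ hd
    have h3 : 1 / ((2:ℝ) ^ (k - 1) - 1) * ((2:ℝ) ^ (k - 1) - 1) = 1 :=
      one_div_mul_cancel (ne_of_gt hd)
    have h2 : -(1 / (2 ^ (k - 1) - 1)) * (2 ^ (k - 1) - 1)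
        = -(1 / (2 ^ (k - 1) - 1) * (2 ^ (k - 1) - 1)) := neg_mul _ _
    linarith
  have hβneg : β < 0 := by nlinarith
  have h2k : (2:ℝ) ^ k = 2 * 2 ^ (k - 1) := by
    have := pow_succ (2:ℝ) (k - 1)
    rw [show k - 1 + 1 = k by omega] at this
    linarith
  have hf1 : f 1 < 0 := by
    have : f 1 = 2 + β * (2 ^ k - 2) := by simp [hf]; ring
    rw [this, h2k]; nlinarith
  set M : ℝ := 1 - β * (2 ^ k - 1) with hM
  have h2k2 : (2:ℝ) ≤ 2 ^ k := by
    calc (2:ℝ) = 2 ^ 1 := by norm_num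
    _ ≤ 2 ^ k := pow_le_pow_right₀ (by norm_num) (by omega)
  have hM1 : 1 < M := by nlinarith
  have hMpos : (0:ℝ) < M := by linarith
  have hub := aux_ub M hM1.le k
  have hfM : 0 < f M := by
    have key : (1 - β) * M + M ^ k ≤ f M * M := by
      have e : f M * M = (1 - β) * (M + M ^ (k+1)) + β * ((M + 1) ^ k * M) := by
        simp only [hf]; ring
      have hb : β * ((M + 1) ^ k * M) ≥ β * (M ^ (k + 1) + (2 ^ k - 1) * M ^ k) := by
        apply mul_le_mul_of_nonpos_left hub hβneg.le
      have e2 : β * (2 ^ k - 1) = 1 - M := by rw [hM]; ring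
      have e3 : β * (M ^ (k + 1) + (2 ^ k - 1) * M ^ k) = β * M ^ (k+1) + (1 - M) * M ^ k := by
        rw [mul_add, ← mul_assoc, e2]
      calc (1 - β) * M + M ^ k
          = (1 - β) * (M + M ^ (k+1)) + (β * M ^ (k+1) + (1 - M) * M ^ k) := by ring
        _ ≤ (1 - β) * (M + M ^ (k+1)) + β * ((M + 1) ^ k * M) := by linarith
        _ = f M * M := e.symm
    have hMk : (0:ℝ) < M ^ k := pow_pos hMpos k
    nlinarith
  obtain ⟨z₀, hmem, hz₀⟩ := intermediate_value_Icc hM1.le hcont.continuousOn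
    (by exact ⟨hf1.le, hfM.le⟩ : (0:ℝ) ∈ Set.Icc (f 1) (f M))
  refine ⟨z₀, ?_, ?_⟩
  · have h1 : 1 ≤ z₀ := hmem.1
    have : z₀ ≠ 1 := by
      intro h; rw [h] at hz₀; rw [hz₀] at hf1; exact lt_irrefl 0 hf1
    rw [abs_of_pos (by linarith)]
    exact lt_of_le_of_ne h1 (Ne.symm this)
  · exact hz₀

lemma rootR2 (k : ℕ) (hk : 2 ≤ k) (β : ℝ) (hβ : 1 < β) :
    ∃ z₀ : ℝ, 1 < |z₀| ∧ (1 - β) * (1 + z₀ ^ k) + β * (1 + z₀) ^ k = 0 := by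
  set f : ℝ → ℝ := fun t => (1 - β) * (1 + t ^ k) + β * (1 + t) ^ k with hf
  have hcont : Continuous f := by fun_prop
  set M : ℝ := β * (k + 1) + 1 with hMdef
  have hk1 : (2:ℝ) ≤ k := by exact_mod_cast hk
  have hβ0 : (0:ℝ) < β := by linarith
  have hM1 : (1:ℝ) < M := by nlinarith
  have hM4 : (4:ℝ) ≤ M := by nlinarith
  have hMpos : (0:ℝ) < M := by linarith
  have hlb := aux_lb M hM1.le k
  have hMk2 : M ^ 2 ≤ M ^ k := pow_le_pow_right₀ hM1.le hk
  have hMk0 : (0:ℝ) < M ^ k := pow_pos hMpos k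
  have e4 : M ^ (k+1) - β * ((k:ℝ)+1) * M ^ k = M ^ k := by
    have h : M - β * ((k:ℝ)+1) = 1 := by rw [hMdef]; push_cast; ring
    calc M ^ (k+1) - β * ((k:ℝ)+1) * M ^ k = M ^ k * (M - β * ((k:ℝ)+1)) := by ring
      _ = M ^ k := by rw [h]; ring
  have hlbβ : β * (M ^ (k+1) - ((k:ℝ)+1) * M ^ k) ≤ β * ((M - 1) ^ k * M) :=
    mul_le_mul_of_nonneg_left hlb hβ0.le
  have hpos : 0 < (1-β)*M + M^k := by
    have h3 : (1-β)*M + M^2 = (β*(k:ℝ)+2)*M := by rw [hMdef]; push_cast; ring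
    have h4 : 0 < (β*(k:ℝ)+2)*M := mul_pos (by nlinarith) hMpos
    linarith [hMk2]
  rcases Nat.even_or_odd k with hev | hodd
  · -- k even : root in [-M, -1]
    have hfm1 : f (-1) < 0 := by
      have e : f (-1) = (1 - β) * 2 := by
        simp only [hf]
        rw [hev.neg_one_pow, show (1:ℝ) + -1 = 0 from by ring, zero_pow (by omega : k ≠ 0)]
        ring
      rw [e]; linarith
    have hfM : 0 < f (-M) := by
      have e : f (-M) = (1 - β) * (1 + M ^ k) + β * (M - 1) ^ k := by
        simp only [hf]
        rw [show ((-M) : ℝ) ^ k = M ^ k from hev.neg_pow M,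
          show ((1 + -M) : ℝ) ^ k = (M - 1) ^ k from by
            rw [show ((1 + -M) : ℝ) = -(M - 1) from by ring, hev.neg_pow]]
      have h2 : (1-β)*(1+M^k)*M + β*(M^(k+1) - ((k:ℝ)+1)*M^k) = (1-β)*M + M^k := by
        linear_combination e4
      have key : ((1 - β) * (1 + M ^ k) + β * (M - 1) ^ k) * M ≥ (1-β)*M + M^k := by
        nlinarith [hlbβ, h2]
      rw [e]
      by_contra hcon
      push_neg at hcon
      have : ((1 - β) * (1 + M ^ k) + β * (M - 1) ^ k) * M ≤ 0 :=
        mul_nonpos_of_nonpos_of_nonneg hcon hMpos.le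
      linarith
    obtain ⟨z₀, hmem, hz₀⟩ := intermediate_value_Icc' (by linarith : -M ≤ (-1:ℝ))
      hcont.continuousOn (by exact ⟨hfm1.le, hfM.le⟩ : (0:ℝ) ∈ Set.Icc (f (-1)) (f (-M)))
    refine ⟨z₀, ?_, hz₀⟩
    have hz1 : z₀ ≤ -1 := hmem.2
    have hne : z₀ ≠ -1 := by
      intro h; rw [h] at hz₀; rw [hz₀] at hfm1; exact lt_irrefl 0 hfm1
    have : z₀ < -1 := lt_of_le_of_ne hz1 hne
    rw [abs_of_neg (by linarith)]; linarith
  · -- k odd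
    set t : ℝ := min 1 ((β-1)*(k:ℝ)/(2*β)) with htdef
    have hkpos : (0:ℝ) < (k:ℝ) := by linarith
    have ht0 : 0 < t := lt_min one_pos (div_pos (mul_pos (by linarith) hkpos) (by linarith))
    have ht1 : t ≤ 1 := min_le_left _ _
    have hfc : 0 < f (-(1+t)) := by
      have e : f (-(1+t)) = (1 - β) * (1 - (1+t)^k) - β * t^k := by
        simp only [hf]
        rw [show ((-(1+t)) : ℝ) ^ k = -((1+t)^k) from hodd.neg_pow (1+t),
          show ((1 + -(1+t)) : ℝ) ^ k = -(t^k) from by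
            rw [show ((1 + -(1+t)) : ℝ) = -t from by ring, hodd.neg_pow]]
        ring
      have h1 : 1 + (k:ℝ)*t ≤ (1+t)^k := one_add_mul_le_pow (by linarith) k
      have h2 : t^k ≤ t^2 := pow_le_pow_of_le_one ht0.le ht1 hk
      have hta : t ≤ (β-1)*(k:ℝ)/(2*β) := min_le_right _ _
      have htb : t * (2*β) ≤ (β-1)*(k:ℝ) := (le_div_iff₀ (by positivity)).mp hta
      have ha : (β-1)*((k:ℝ)*t) ≤ (β-1)*((1+t)^k - 1) :=
        mul_le_mul_of_nonneg_left (by linarith) (by linarith)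
      have hb : β*t^k ≤ β*t^2 := mul_le_mul_of_nonneg_left h2 hβ0.le
      have hc : (t*(2*β))*t ≤ ((β-1)*(k:ℝ))*t := mul_le_mul_of_nonneg_right htb ht0.le
      have hd : 0 < (β-1)*(k:ℝ)*t := by
        apply mul_pos (mul_pos (by linarith) hkpos) ht0
      rw [e]
      nlinarith [ha, hb, hc, hd]
    have hfM : f (-M) < 0 := by
      have e : f (-M) = (β - 1) * (M^k - 1) - β * (M - 1) ^ k := by
        simp only [hf]
        rw [show ((-M) : ℝ) ^ k = -(M ^ k) from hodd.neg_pow M,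
          show ((1 + -M) : ℝ) ^ k = -((M - 1) ^ k) from by
            rw [show ((1 + -M) : ℝ) = -(M - 1) from by ring, hodd.neg_pow]]
        ring
      have e5 : β * (M ^ (k+1) - ((k:ℝ)+1) * M ^ k)
          = (β-1)*(M^k-1)*M + (M^k + (β-1)*M) := by linear_combination e4
      rw [e5] at hlbβ
      have hMb : 0 < M^k + (β-1)*M := by
        have := mul_pos (show (0:ℝ) < β - 1 by linarith) hMpos
        linarith
      have h7 : ((β-1)*(M^k-1))*M < (β*(M-1)^k)*M := by linarith [hlbβ, hMb]
      have h8 : (β-1)*(M^k-1) < β*(M-1)^k := lt_of_mul_lt_mul_right h7 hMpos.le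
      rw [e]; linarith
    obtain ⟨z₀, hmem, hz₀⟩ := intermediate_value_Icc (by linarith : -M ≤ -(1+t))
      hcont.continuousOn (by exact ⟨hfM.le, hfc.le⟩ : (0:ℝ) ∈ Set.Icc (f (-M)) (f (-(1+t))))
    refine ⟨z₀, ?_, hz₀⟩
    have hz1 : z₀ ≤ -(1+t) := hmem.2
    rw [abs_of_neg (by linarith)]; linarith

lemma caseL2 (k : ℕ) (hk : 2 ≤ k) (β : ℝ) (hb : β = -(1 / (2 ^ (k - 1) - 1))) :
    ∃ (n : ℕ) (E : Finset (Finset (Fin n))),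
      (∀ e ∈ E, e.card = k) ∧
      (∀ u v : Fin n,
        Relation.ReflTransGen (fun a b => ∃ e ∈ E, a ∈ e ∧ b ∈ e) u v) ∧
      ∃ z : Fin n → ℂ,
        (∀ i, 1 ≤ ‖z i‖) ∧ (∃ i, 1 < ‖z i‖) ∧
        (∑ S : Finset (Fin n),
            (β : ℂ) ^ (E.filter (fun e => (e ∩ S).Nonempty ∧ (e \ S).Nonempty)).card *
              ∏ i ∈ S, z i) = 0 := by
  have hd : (0:ℝ) < 2 ^ (k - 1) - 1 := by
    have : (2:ℝ) ^ 1 ≤ 2 ^ (k - 1) := pow_le_pow_right₀ (by norm_num) (by omega)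
    norm_num at this; linarith
  have h1 : β * (2 ^ (k - 1) - 1) = -1 := by
    rw [hb, neg_mul, one_div_mul_cancel (ne_of_gt hd)]
  have h1C : (β:ℂ) * ((2:ℂ) ^ (k - 1) - 1) = -1 := by exact_mod_cast h1
  apply build k hk β 2 1 1 (by norm_num) (by norm_num) (by norm_num)
  have hC : ((1:ℂ) + 1) * ((1:ℂ) + 1) ^ (k - 2) = 2 ^ (k - 1) := by
    rw [show (1:ℂ) + 1 = 2 from by norm_num,
      show k - 1 = (k - 2) + 1 from by omega, pow_succ]
    ring
  rw [show ((2:ℂ)) * 1 * (1:ℂ) ^ (k - 2) = 2 from by rw [one_pow]; ring,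
    show ((1:ℂ) + 2) * (1 + 1) * (1 + 1) ^ (k - 2) = 3 * (((1:ℂ) + 1) * ((1:ℂ) + 1) ^ (k - 2)) from by ring,
    hC]
  linear_combination 3 * h1C

lemma caseR1 (k : ℕ) (hk : 2 ≤ k) (β : ℝ) (hb : β = 1) :
    ∃ (n : ℕ) (E : Finset (Finset (Fin n))),
      (∀ e ∈ E, e.card = k) ∧
      (∀ u v : Fin n,
        Relation.ReflTransGen (fun a b => ∃ e ∈ E, a ∈ e ∧ b ∈ e) u v) ∧
      ∃ z : Fin n → ℂ,
        (∀ i, 1 ≤ ‖z i‖) ∧ (∃ i, 1 < ‖z i‖) ∧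
        (∑ S : Finset (Fin n),
            (β : ℂ) ^ (E.filter (fun e => (e ∩ S).Nonempty ∧ (e \ S).Nonempty)).card *
              ∏ i ∈ S, z i) = 0 := by
  apply build k hk β 2 (-1) (-1) (by norm_num) (by norm_num) (by norm_num)
  subst hb
  push_cast
  ring

lemma caseR3 (k : ℕ) (hk3 : 3 ≤ k) (β : ℝ) (hβ1 : β < 1)
    (hc : 1 - β ≤ β * 2 ^ (k - 1) * Real.cos (Real.pi / ((k:ℝ) - 1)) ^ (k - 1)) :
    ∃ (n : ℕ) (E : Finset (Finset (Fin n))),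
      (∀ e ∈ E, e.card = k) ∧
      (∀ u v : Fin n,
        Relation.ReflTransGen (fun a b => ∃ e ∈ E, a ∈ e ∧ b ∈ e) u v) ∧
      ∃ z : Fin n → ℂ,
        (∀ i, 1 ≤ ‖z i‖) ∧ (∃ i, 1 < ‖z i‖) ∧
        (∑ S : Finset (Fin n),
            (β : ℂ) ^ (E.filter (fun e => (e ∩ S).Nonempty ∧ (e \ S).Nonempty)).card *
              ∏ i ∈ S, z i) = 0 := by
  have hk : 2 ≤ k := by omega
  have hk2 : (2:ℝ) ≤ (k:ℝ) - 1 := by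
    have : (3:ℝ) ≤ (k:ℝ) := by exact_mod_cast hk3
    linarith
  set φ : ℝ := Real.pi / ((k:ℝ) - 1) with hφdef
  set c₀ : ℝ := Real.cos φ with hc₀def
  set s₀ : ℝ := Real.sin φ with hs₀def
  have hπ := Real.pi_pos
  have hφ0 : 0 < φ := by apply div_pos hπ; linarith
  have hφhalf : φ ≤ Real.pi / 2 :=
    div_le_div_of_nonneg_left hπ.le (by norm_num) hk2
  have hc₀nonneg : 0 ≤ c₀ := Real.cos_nonneg_of_mem_Icc ⟨by linarith, hφhalf⟩
  have hs₀pos : 0 < s₀ := Real.sin_pos_of_pos_of_lt_pi hφ0 (by linarith)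
  have hcs : c₀ ^ 2 + s₀ ^ 2 = 1 := by
    rw [hc₀def, hs₀def, add_comm]; exact Real.sin_sq_add_cos_sq φ
  set u : ℝ := 1 - β with hudef
  have hu : 0 < u := by rw [hudef]; linarith
  have hβpos : 0 < β := by
    by_contra hb
    push_neg at hb
    have h1 : β * 2 ^ (k - 1) * c₀ ^ (k - 1) ≤ 0 := by
      apply mul_nonpos_of_nonpos_of_nonneg
      · exact mul_nonpos_of_nonpos_of_nonneg hb (by positivity)
      · exact pow_nonneg hc₀nonneg _
    linarith [hc, hu]
  have hc₀pos : 0 < c₀ := by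
    rcases eq_or_lt_of_le hc₀nonneg with h0 | h; swap
    · exact h
    · exfalso
      rw [← h0, zero_pow (by omega : k - 1 ≠ 0), mul_zero] at hc
      linarith
  have hc₀lt1 : c₀ < 1 := by nlinarith
  set q : ℝ := β * 2 ^ (k - 2) * c₀ ^ (k - 2) with hqdef
  have hq : 0 < q := by rw [hqdef]; positivity
  have hpw2 : (2:ℝ) ^ (k - 1) = 2 ^ (k - 2) * 2 := by
    rw [← pow_succ]; congr 1; omega
  have hpwc : c₀ ^ (k - 1) = c₀ ^ (k - 2) * c₀ := by
    rw [← pow_succ]; congr 1; omega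
  have h2qc : u ≤ 2 * q * c₀ := by
    have : 2 * q * c₀ = β * 2 ^ (k - 1) * c₀ ^ (k - 1) := by
      rw [hqdef, hpw2, hpwc]; ring
    rw [this]; exact hc
  -- complex setup
  set y : ℂ := (c₀ : ℂ) + (s₀ : ℂ) * Complex.I with hydef
  set w : ℂ := y ^ 2 with hwdef
  have hcsC : ((c₀:ℂ)) ^ 2 + ((s₀:ℂ)) ^ 2 = 1 := by exact_mod_cast hcs
  have hyexp : y = Complex.exp ((φ:ℂ) * Complex.I) := by
    rw [Complex.exp_mul_I, ← Complex.ofReal_cos, ← Complex.ofReal_sin, hydef, hc₀def, hs₀def]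
  have hφπ : ((k:ℝ) - 1) * φ = Real.pi := by
    rw [hφdef]; field_simp
  have hyk : y ^ (k - 1) = -1 := by
    rw [hyexp, ← Complex.exp_nat_mul]
    have hcast : ((k - 1 : ℕ) : ℂ) * ((φ:ℂ) * Complex.I) = (Real.pi : ℂ) * Complex.I := by
      have h1 : ((k - 1 : ℕ) : ℝ) * φ = Real.pi := by
        rw [Nat.cast_sub (by omega : 1 ≤ k)]
        push_cast
        exact hφπ
      calc ((k - 1 : ℕ) : ℂ) * ((φ:ℂ) * Complex.I)
          = ((((k - 1 : ℕ) : ℝ) * φ : ℝ) : ℂ) * Complex.I := by push_cast; ring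
        _ = (Real.pi : ℂ) * Complex.I := by rw [h1]
    rw [hcast, Complex.exp_pi_mul_I]
  have hy0 : y ≠ 0 := by
    intro h
    have : (s₀:ℂ) = 0 := by
      have := congrArg Complex.im h
      simpa [hydef] using this
    have : s₀ = 0 := by exact_mod_cast this
    linarith
  have habsy : ‖y‖ = 1 := by
    have hn : Complex.normSq y = 1 := by
      simp [Complex.normSq_apply, hydef]
      nlinarith [hcs]
    have := Complex.sq_norm y
    rw [hn] at this
    nlinarith [norm_nonneg y]
  have habsw : ‖w‖ = 1 := by
    rw [hwdef, norm_pow, habsy, one_pow]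
  have h1w : 1 + w = 2 * (c₀:ℂ) * y := by
    rw [hwdef, hydef]
    linear_combination ((s₀:ℂ)) ^ 2 * Complex.I_sq - hcsC
  have habs2 : (1:ℝ) < ‖(2:ℂ)‖ := by norm_num
  -- boundary vs strict
  rcases eq_or_lt_of_le h2qc with hbd | hlt
  · -- boundary: z = (2, w, w, ..., w)
    apply build k hk β 2 w w habs2 habsw.ge habsw.ge
    have hwk1 : w * w ^ (k - 2) = 1 := by
      have h1 : w * w ^ (k - 2) = w ^ (k - 1) := by
        rw [show k - 1 = (k - 2) + 1 from by omega, pow_succ]; ring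
      rw [h1, hwdef, ← pow_mul, show 2 * (k - 1) = (k - 1) * 2 from by ring, pow_mul, hyk]
      norm_num
    have h1wk : (1 + w) * (1 + w) ^ (k - 2) = -((2 * (c₀:ℂ)) ^ (k - 1)) := by
      have h1 : (1 + w) * (1 + w) ^ (k - 2) = (1 + w) ^ (k - 1) := by
        rw [show k - 1 = (k - 2) + 1 from by omega, pow_succ]; ring
      rw [h1, h1w, mul_pow, hyk]
      ring
    have hrb : (1:ℝ) - β = β * (2 * c₀) ^ (k - 1) := by
      have : (2 * c₀) ^ (k - 1) = 2 ^ (k - 1) * c₀ ^ (k - 1) := mul_pow 2 c₀ (k - 1)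
      rw [this]
      have h2 : 2 * q * c₀ = β * 2 ^ (k - 1) * c₀ ^ (k - 1) := by
        rw [hqdef, hpw2, hpwc]; ring
      rw [hudef] at hbd
      rw [← mul_assoc]
      linarith [hbd, h2]
    have hrbC : (1:ℂ) - (β:ℂ) = (β:ℂ) * (2 * (c₀:ℂ)) ^ (k - 1) := by
      exact_mod_cast congrArg Complex.ofReal hrb
    rw [show (2:ℂ) * w * w ^ (k - 2) = 2 * (w * w ^ (k - 2)) from by ring, hwk1,
      show (1 + (2:ℂ)) * (1 + w) * (1 + w) ^ (k - 2) = 3 * ((1 + w) * (1 + w) ^ (k - 2)) from by ring,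
      h1wk]
    linear_combination 3 * hrbC
  · -- strict: quadratic slice
    set r : ℝ := Real.sqrt (2 * u * q * c₀ - u ^ 2) with hrdef
    have hrin : 0 < 2 * u * q * c₀ - u ^ 2 := by nlinarith
    have hr2 : r ^ 2 = 2 * u * q * c₀ - u ^ 2 := Real.sq_sqrt hrin.le
    have hr0 : 0 < r := Real.sqrt_pos.mpr hrin
    set x : ℂ := (c₀ : ℂ) - (s₀ : ℂ) * Complex.I with hxdef
    have hx2 : x ^ 2 = 2 * (c₀:ℂ) * x - 1 := by
      rw [hxdef]
      linear_combination ((s₀:ℂ)) ^ 2 * Complex.I_sq - hcsC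
    have hxy : x * y = 1 := by
      rw [hxdef, hydef]
      linear_combination (-((s₀:ℂ)) ^ 2) * Complex.I_sq + hcsC
    have hD : 0 < q ^ 2 + u ^ 2 - 2 * u * q * c₀ := by
      nlinarith [sq_nonneg (q - u * c₀), mul_pos (mul_pos hu hu) (mul_pos hs₀pos hs₀pos)]
    have hnormden : Complex.normSq ((q:ℂ) - (u:ℂ) * x) = q ^ 2 + u ^ 2 - 2 * u * q * c₀ := by
      have h1 : ((q:ℂ) - (u:ℂ) * x) = Complex.ofReal (q - u * c₀) + Complex.ofReal (u * s₀) * Complex.I := by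
        rw [hxdef]; push_cast; ring
      rw [h1, Complex.normSq_add_mul_I]
      nlinarith [hcs]
    have hden0 : (q:ℂ) - (u:ℂ) * x ≠ 0 := by
      intro h
      rw [h] at hnormden
      simp only [Complex.normSq_zero] at hnormden
      linarith
    set ρ : ℂ := -(((q + r : ℝ)):ℂ) / ((q:ℂ) - (u:ℂ) * x) with hρdef
    have habsden_sq : (‖(q:ℂ) - (u:ℂ) * x‖) ^ 2 = q ^ 2 + u ^ 2 - 2 * u * q * c₀ := by
      rw [Complex.sq_norm]; exact hnormden
    have habsden_pos : 0 < ‖(q:ℂ) - (u:ℂ) * x‖ :=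
      norm_pos_iff.mpr hden0
    have hnum : ‖-(((q + r : ℝ)):ℂ)‖ = q + r := by
      rw [norm_neg, Complex.norm_real, Real.norm_eq_abs, abs_of_pos (by linarith)]
    have habsρ : 1 < ‖ρ‖ := by
      rw [hρdef, norm_div, hnum, lt_div_iff₀ habsden_pos]
      nlinarith [habsden_sq, habsden_pos, mul_pos hq hr0, mul_pos hr0 hr0, hr2,
        norm_nonneg ((q:ℂ) - (u:ℂ) * x)]
    apply build k hk β ρ ρ w habsρ habsρ.le habsw.ge
    -- main algebraic identity
    have hwk2 : w ^ (k - 2) = x ^ 2 := by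
      have hwy : w ^ (k - 2) * y ^ 2 = 1 := by
        rw [hwdef, ← pow_mul, ← pow_add,
          show 2 * (k - 2) + 2 = (k - 1) * 2 from by omega, pow_mul, hyk]
        norm_num
      have hx2y : x ^ 2 * y ^ 2 = 1 := by
        rw [← mul_pow, hxy, one_pow]
      exact mul_right_cancel₀ (pow_ne_zero 2 hy0) (hwy.trans hx2y.symm)
    have hyk2 : y ^ (k - 2) = -x := by
      apply mul_right_cancel₀ hy0
      rw [show y ^ (k - 2) * y = y ^ (k - 1) from by
        rw [show k - 1 = (k - 2) + 1 from by omega, pow_succ], hyk]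
      rw [neg_mul, hxy]
    have h1wk2 : (1 + w) ^ (k - 2) = (2 * (c₀:ℂ)) ^ (k - 2) * (-x) := by
      rw [h1w, mul_pow, hyk2]
    have hq' : (β:ℂ) * (2 * (c₀:ℂ)) ^ (k - 2) = (q:ℂ) := by
      have : q = β * (2 * c₀) ^ (k - 2) := by
        rw [hqdef, mul_pow]; ring
      exact_mod_cast (congrArg Complex.ofReal this).symm
    have hu' : (u:ℂ) = 1 - (β:ℂ) := by
      rw [hudef]; push_cast; ring
    have hrC : ((r:ℂ)) ^ 2 = 2 * (u:ℂ) * (q:ℂ) * (c₀:ℂ) - (u:ℂ) ^ 2 := by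
      exact_mod_cast congrArg Complex.ofReal hr2
    have hρden : ρ * ((q:ℂ) - (u:ℂ) * x) = -((q:ℂ) + (r:ℂ)) := by
      rw [hρdef, div_mul_cancel₀ _ hden0]
      push_cast; ring
    have key2 : (u:ℂ) * (1 + ρ * ρ * x ^ 2) - (q:ℂ) * x * ((1 + ρ) * (1 + ρ)) = 0 := by
      have key3 : ((q:ℂ) - (u:ℂ) * x) ^ 2
          * ((u:ℂ) * (1 + ρ * ρ * x ^ 2) - (q:ℂ) * x * ((1 + ρ) * (1 + ρ))) = 0 := by
        linear_combination
          ((u:ℂ) * x ^ 2 * (ρ * ((q:ℂ) - (u:ℂ) * x) - ((q:ℂ) + (r:ℂ)))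
            - (q:ℂ) * x * (2 * ((q:ℂ) - (u:ℂ) * x) + ρ * ((q:ℂ) - (u:ℂ) * x) - ((q:ℂ) + (r:ℂ)))) * hρden
          + ((u:ℂ) * (q:ℂ) ^ 2 - (q:ℂ) * (u:ℂ) ^ 2 * x) * hx2
          + ((u:ℂ) * x ^ 2 - (q:ℂ) * x) * hrC
      exact (mul_eq_zero.mp key3).resolve_left (pow_ne_zero 2 hden0)
    rw [hwk2, h1wk2]
    linear_combination key2 - (1 + ρ * ρ * x ^ 2) * hu' - ((1 + ρ) * (1 + ρ) * x) * hq'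

/-- **Optimality of the hypergraph Lee-Yang theorem (multivariate form).**
Let `k ≥ 2` and let `β` be a real number for which the condition
"`−1 < β < 1` if `k = 2`, and `−1/(2^{k−1} − 1) < β < 1/(2^{k−1} cos^{k−1}(π/(k−1)) + 1)`
if `k ≥ 3`" fails.  Then there is a finite connected hypergraph all of whose hyperedges
have size exactly `k` whose multivariate Ising partition function
`Z_H^β(z) = Σ_{S ⊆ V} β^{|E(S,S̄)|} ∏_{i∈S} z_i` does not have the Lee-Yang property,
i.e. it vanishes at some point with all `|z_i| ≥ 1` and some `|z_i| > 1`. -/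
theorem stmt3 (k : ℕ) (hk : 2 ≤ k) (β : ℝ)
    (hfail : ¬ ((k = 2 → -1 < β ∧ β < 1) ∧
      (3 ≤ k →
        -(1 / (2 ^ (k - 1) - 1)) < β ∧
        β < 1 / (2 ^ (k - 1) * Real.cos (Real.pi / (k - 1)) ^ (k - 1) + 1)))) :
    ∃ (n : ℕ) (E : Finset (Finset (Fin n))),
      (∀ e ∈ E, e.card = k) ∧
      (∀ u v : Fin n,
        Relation.ReflTransGen (fun a b => ∃ e ∈ E, a ∈ e ∧ b ∈ e) u v) ∧
      ∃ z : Fin n → ℂ,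
        (∀ i, 1 ≤ ‖z i‖) ∧ (∃ i, 1 < ‖z i‖) ∧
        (∑ S : Finset (Fin n),
            (β : ℂ) ^ (E.filter (fun e => (e ∩ S).Nonempty ∧ (e \ S).Nonempty)).card *
              ∏ i ∈ S, z i) = 0 := by
  rcases le_or_gt β (-(1 / (2 ^ (k - 1) - 1))) with hL | hL
  · rcases eq_or_lt_of_le hL with hEq | hLt
    · exact caseL2 k hk β hEq
    · obtain ⟨z₀, h1, h2⟩ := rootL1 k hk β hLt
      exact case_real k hk β z₀ h1 h2
  · rcases le_or_gt 1 β with hR | hR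
    · rcases eq_or_lt_of_le hR with hEq | hGt
      · exact caseR1 k hk β hEq.symm
      · obtain ⟨z₀, h1, h2⟩ := rootR2 k hk β hGt
        exact case_real k hk β z₀ h1 h2
    · -- middle range : β must violate the upper bound, and k ≥ 3
      have hk3 : 3 ≤ k := by
        by_contra hcon
        have hk2 : k = 2 := by omega
        apply hfail
        subst hk2
        constructor
        · intro _
          constructor
          · norm_num at hL
            exact hL
          · exact hR
        · intro h3
          exact absurd h3 (by omega)
      have hφhalf : Real.pi / ((k:ℝ) - 1) ≤ Real.pi / 2 := by
        apply div_le_div_of_nonneg_left Real.pi_pos.le (by norm_num)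
        have : (3:ℝ) ≤ (k:ℝ) := by exact_mod_cast hk3
        linarith
      have hφpos : 0 < Real.pi / ((k:ℝ) - 1) := by
        apply div_pos Real.pi_pos
        have : (3:ℝ) ≤ (k:ℝ) := by exact_mod_cast hk3
        linarith
      have hcos0 : 0 ≤ Real.cos (Real.pi / ((k:ℝ) - 1)) :=
        Real.cos_nonneg_of_mem_Icc ⟨by linarith, hφhalf⟩
      have hdpos : (0:ℝ) < 2 ^ (k - 1) * Real.cos (Real.pi / ((k:ℝ) - 1)) ^ (k - 1) + 1 := by
        have h1 : (0:ℝ) ≤ 2 ^ (k - 1) * Real.cos (Real.pi / ((k:ℝ) - 1)) ^ (k - 1) := by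
          apply mul_nonneg (by positivity) (pow_nonneg hcos0 _)
        linarith
      have hmid : 1 / (2 ^ (k - 1) * Real.cos (Real.pi / ((k:ℝ) - 1)) ^ (k - 1) + 1) ≤ β := by
        by_contra hcon
        push_neg at hcon
        exact hfail ⟨fun hk2 => absurd hk2 (by omega), fun _ => ⟨hL, hcon⟩⟩
      have hc : 1 - β ≤ β * 2 ^ (k - 1) * Real.cos (Real.pi / ((k:ℝ) - 1)) ^ (k - 1) := by
        have := (div_le_iff₀ hdpos).mp hmid
        nlinarith [this]
      exact caseR3 k hk3 β hR hc
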